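/- Let n ≥ 2 be an integer, let l ∈ (0, 2/n), and let α satisfy 2/n ≤ α < 1 + 1/n − l/2. Then there exist θ with 1 < θ < n/(n−2) (interpreting n/(n−2) = ∞ when n = 2) and μ > n/2 such that l(2μ−1)/(4μ−n) < (n(θ + 1 − 2αθ) + 2θ)/(2nθ + n² − n²θ). -/

import Mathlib

set_option maxHeartbeats 1000000


theorem stmt_3 (n : ℕ) (hn : 2 ≤ n) (l α : ℝ)
    (hl0 : 0 < l) (hl : l < 2 / n)
    (hα1 : 2 / n ≤ α) (hα2 : α < 1 + 1 / n - l / 2) :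
    ∃ θ μ : ℝ, 1 < θ ∧ θ * ((n : ℝ) - 2) < n ∧ (n : ℝ) / 2 < μ ∧
      l * (2 * μ - 1) / (4 * μ - n) <
        ((n : ℝ) * (θ + 1 - 2 * α * θ) + 2 * θ) /
          (2 * n * θ + (n : ℝ) ^ 2 - (n : ℝ) ^ 2 * θ) := by
  obtain ⟨N, hNdef⟩ : ∃ N : ℝ, N = (n : ℝ) := ⟨_, rfl⟩
  rw [← hNdef] at hl hα1 hα2 ⊢
  have hN2 : (2:ℝ) ≤ N := by rw [hNdef]; exact_mod_cast hn
  have hN0 : (0:ℝ) < N := by linarith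
  have hNne : N ≠ 0 := ne_of_gt hN0
  obtain ⟨δ, hδdef⟩ : ∃ δ : ℝ, δ = 1 + 1/N - α - l/2 := ⟨_, rfl⟩
  have hδ : 0 < δ := by
    have : α < 1 + 1/N - l/2 := hα2
    linarith [hδdef]
  have hδne : δ ≠ 0 := ne_of_gt hδ
  have h1N : 0 < 1/N := by positivity
  have h1N2 : 1/N ≤ 1/2 := by
    apply one_div_le_one_div_of_le <;> linarith
  have h2N : 2/N = 2*(1/N) := by ring
  have hδ1 : δ < 1 := by
    have := hα1
    rw [h2N] at this
    linarith [hδdef]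
  have hαN' : α * N = N + 1 - l*N/2 - δ*N := by
    rw [hδdef]
    field_simp
    ring
  -- the small parameter e = δ/(5N) and the shift m = lN/δ
  obtain ⟨e, he⟩ : ∃ e : ℝ, e = δ/(5*N) := ⟨_, rfl⟩
  have hepos : 0 < e := by rw [he]; positivity
  have heN : e * N = δ/5 := by rw [he]; field_simp
  obtain ⟨m, hmdef⟩ : ∃ m : ℝ, m = l*N/δ := ⟨_, rfl⟩
  have hmpos : 0 < m := by rw [hmdef]; positivity
  have hm : m * δ = l * N := by rw [hmdef]; field_simp
  refine ⟨1 + e, N + m, ?_, ?_, ?_, ?_⟩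
  · linarith
  · have h3 : (1+e)*(N-2) = (N-2) + (e*N) - 2*e := by ring
    rw [h3, heN]
    linarith
  · linarith
  · have hD : 2*N*(1+e) + N^2 - N^2*(1+e) = 2*N - N*(N-2)*e := by ring
    have h3N : N*(e*N) = N*(δ/5) := by rw [heN]
    have hDpos : 0 < 2*N*(1+e) + N^2 - N^2*(1+e) := by
      rw [hD]
      have h4 : (N-2)*δ ≤ (N-2)*1 :=
        mul_le_mul_of_nonneg_left hδ1.le (by linarith)
      nlinarith [h3N]
    have hdLpos : 0 < 4*(N + m) - N := by linarith
    have hmid1 : l*(2*(N + m)-1)/(4*(N + m)-N) < l/2 + δ/2 := by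
      rw [div_lt_iff₀ hdLpos, ← mul_lt_mul_iff_of_pos_right hδ]
      have hm2 : l*(m*δ) = l*(l*N) := by rw [hm]
      have hm3 : δ*(m*δ) = δ*(l*N) := by rw [hm]
      nlinarith [hm2, hm3, mul_pos (mul_pos hl0 hN0) hδ,
        mul_pos hN0 (mul_pos hδ hδ), mul_pos hl0 hδ]
    have hNum : N*((1+e)+1-2*α*(1+e)) + 2*(1+e)
        = l*N + 2*(δ*N) + (l*N + 2*(δ*N) - N)*e := by
      linear_combination (-2*(1+e)) * hαN'
    have hmid2 : l/2 + δ/2 <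
        (N*((1+e)+1-2*α*(1+e)) + 2*(1+e)) / (2*N*(1+e) + N^2 - N^2*(1+e)) := by
      rw [lt_div_iff₀ hDpos, hNum, hD]
      have key1 : (l/2+δ/2)*(2*N - N*(N-2)*e)
          = l*N + δ*N - (l/2+δ/2)*(N-2)*(δ/5) := by
        linear_combination (-(l/2+δ/2)*(N-2)) * heN
      have key2 : (l*N + 2*(δ*N) - N)*e = (l + 2*δ - 1)*(δ/5) := by
        linear_combination (l + 2*δ - 1) * heN
      rw [key1]
      have expand : l*N + 2*(δ*N) + (l*N + 2*(δ*N) - N)*e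
          = l*N + 2*(δ*N) + (l + 2*δ - 1)*(δ/5) := by rw [key2]
      rw [expand]
      have p1 : δ*2 ≤ δ*N := mul_le_mul_of_nonneg_left hN2 hδ.le
      nlinarith [p1, mul_pos hl0 hδ, mul_pos hδ hδ,
        mul_nonneg (mul_nonneg (by linarith : (0:ℝ) ≤ N-2) hl0.le) hδ.le,
        mul_nonneg (mul_nonneg (by linarith : (0:ℝ) ≤ N-2) hδ.le) hδ.le]
    linarith
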